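/- Let d ≥ 1, let rˡ, rᵇ, r^{1,b}, …, r^{d,b} be real numbers with rˡ ≤ rᵇ, rˡ ≤ r^{i,b} and rᵇ ≤ r^{i,b} for every i, and let Bˡ, Bᵇ > 0. Define g : ℝ × ℝᵈ → ℝ by g(y,a) := −Σ_{i=1}^d r^{i,b}·aᵢ⁺ + rˡ·(y + Σ_{i=1}^d aᵢ⁻)⁺ − rᵇ·(y + Σ_{i=1}^d aᵢ⁻)⁻. If x₁ ≥ 0, x₂ ≤ 0 and x₁·x₂ = 0, then for all y ∈ ℝ and a ∈ ℝᵈ: g(y + x₁Bˡ, a) + g(−y + x₂Bᵇ, −a) − x₁rˡBˡ − x₂rᵇBᵇ ≤ 0. -/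
import Mathlib

private lemma aux_f_le_l {rl rb w : ℝ} (h : rl ≤ rb) :
    rl * max w 0 - rb * max (-w) 0 ≤ rl * w := by
  rcases le_or_gt 0 w with hw | hw
  · rw [max_eq_left hw, max_eq_right (by linarith : -w ≤ 0)]; ring_nf; rfl
  · rw [max_eq_right hw.le, max_eq_left (by linarith : 0 ≤ -w)]
    nlinarith

private lemma aux_f_le_b {rl rb w : ℝ} (h : rl ≤ rb) :
    rl * max w 0 - rb * max (-w) 0 ≤ rb * w := by
  rcases le_or_gt 0 w with hw | hw
  · rw [max_eq_left hw, max_eq_right (by linarith : -w ≤ 0)]; nlinarith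
  · rw [max_eq_right hw.le, max_eq_left (by linarith : 0 ≤ -w)]; ring_nf; rfl

/-- Lemma `lemmnew3`: if `x₁ ≥ 0`, `x₂ ≤ 0` and `x₁·x₂ = 0`, then the driver
inequality `g(y + x₁Bˡ, a) + g(−y + x₂Bᵇ, −a) − x₁rˡBˡ − x₂rᵇBᵇ ≤ 0` holds. -/
theorem stmt_5 (d : ℕ) (hd : 1 ≤ d) (rl rb : ℝ) (rib : Fin d → ℝ) (Bl Bb : ℝ)
    (hlb : rl ≤ rb) (hibl : ∀ i, rl ≤ rib i) (hibb : ∀ i, rb ≤ rib i)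
    (hBl : 0 < Bl) (hBb : 0 < Bb)
    (g : ℝ → (Fin d → ℝ) → ℝ)
    (hg : ∀ y a, g y a = -(∑ i, rib i * max (a i) 0)
      + rl * max (y + ∑ i, max (-(a i)) 0) 0
      - rb * max (-(y + ∑ i, max (-(a i)) 0)) 0)
    (x₁ x₂ : ℝ) (hx₁ : 0 ≤ x₁) (hx₂ : x₂ ≤ 0) (hx : x₁ * x₂ = 0)
    (y : ℝ) (a : Fin d → ℝ) :
    g (y + x₁ * Bl) a + g (-y + x₂ * Bb) (fun i => -(a i))
      - x₁ * rl * Bl - x₂ * rb * Bb ≤ 0 := by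
  rw [hg, hg]
  simp only [neg_neg]
  set S1 : ℝ := ∑ i, max (a i) 0 with hS1def
  set S2 : ℝ := ∑ i, max (-(a i)) 0 with hS2def
  set A : ℝ := ∑ i, rib i * max (a i) 0 with hAdef
  set B : ℝ := ∑ i, rib i * max (-(a i)) 0 with hBdef
  set u : ℝ := y + x₁ * Bl + S2 with hudef
  set v : ℝ := -y + x₂ * Bb + S1 with hvdef
  have hS1l : rl * S1 ≤ A := by
    rw [hS1def, hAdef, Finset.mul_sum]
    exact Finset.sum_le_sum fun i _ =>
      mul_le_mul_of_nonneg_right (hibl i) (le_max_right _ _)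
  have hS2l : rl * S2 ≤ B := by
    rw [hS2def, hBdef, Finset.mul_sum]
    exact Finset.sum_le_sum fun i _ =>
      mul_le_mul_of_nonneg_right (hibl i) (le_max_right _ _)
  have hS1b : rb * S1 ≤ A := by
    rw [hS1def, hAdef, Finset.mul_sum]
    exact Finset.sum_le_sum fun i _ =>
      mul_le_mul_of_nonneg_right (hibb i) (le_max_right _ _)
  have hS2b : rb * S2 ≤ B := by
    rw [hS2def, hBdef, Finset.mul_sum]
    exact Finset.sum_le_sum fun i _ =>
      mul_le_mul_of_nonneg_right (hibb i) (le_max_right _ _)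
  rcases mul_eq_zero.mp hx with h1 | h2
  · -- x₁ = 0 : use the borrowing-rate bound
    have hu := aux_f_le_b (w := u) hlb
    have hv := aux_f_le_b (w := v) hlb
    have hsum : rb * u + rb * v = x₁ * Bl * rb + x₂ * rb * Bb + rb * S1 + rb * S2 := by
      rw [hudef, hvdef]; ring
    have hx1 : x₁ * Bl * rb = 0 := by rw [h1]; ring
    have hx1' : x₁ * rl * Bl = 0 := by rw [h1]; ring
    linarith
  · -- x₂ = 0 : use the lending-rate bound
    have hu := aux_f_le_l (w := u) hlb
    have hv := aux_f_le_l (w := v) hlb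
    have hsum : rl * u + rl * v = x₁ * rl * Bl + x₂ * Bb * rl + rl * S1 + rl * S2 := by
      rw [hudef, hvdef]; ring
    have hx2 : x₂ * Bb * rl = 0 := by rw [h2]; ring
    have hx2' : x₂ * rb * Bb = 0 := by rw [h2]; ring
    linarith
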